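/- Let d ≥ 1 be an integer and let β ∈ (0, d). There exists a constant c > 0, depending only on d and β, such that for every R ≥ 1 and every T with 0 < T ≤ 1, ∫_0^T ∫_{Q_R × Q_R} ∫_{ℝ^d} p_{2s}(ỹ − x₁ + x₂) ‖ỹ‖^{−β} dỹ dx₁ dx₂ ds ≥ c · T · R^{2d−β}. -/

import Mathlib

open MeasureTheory

noncomputable def heatKernel (d : ℕ) (t : ℝ) (x : EuclideanSpace ℝ (Fin d)) : ℝ :=
  (2 * Real.pi * t) ^ (-(d : ℝ) / 2) * Real.exp (-‖x‖ ^ 2 / (2 * t))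

def box (d : ℕ) (R : ℝ) : Set (EuclideanSpace ℝ (Fin d)) :=
  {x | ∀ i, |x i| ≤ R}

section Aux

open ENNReal Metric Set

lemma hk_nonneg (d : ℕ) {t : ℝ} (ht : 0 < t) (x : EuclideanSpace ℝ (Fin d)) :
    0 ≤ heatKernel d t x := by
  unfold heatKernel
  have : (0:ℝ) < 2 * Real.pi * t := by positivity
  positivity

lemma measurable_heatKernel_comp {α : Type*} [MeasurableSpace α] {d : ℕ}
    {t : α → ℝ} {v : α → EuclideanSpace ℝ (Fin d)} (ht : Measurable t) (hv : Measurable v) :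
    Measurable fun a => heatKernel d (t a) (v a) := by
  unfold heatKernel
  exact ((ht.const_mul (2 * Real.pi)).pow measurable_const).mul
    (Real.measurable_exp.comp (((hv.norm.pow measurable_const).neg).div (ht.const_mul 2)))

lemma gauss_integrable (d : ℕ) {b : ℝ} (hb : 0 < b) :
    Integrable fun y : EuclideanSpace ℝ (Fin d) => Real.exp (-b * ‖y‖^2) := by
  have h := GaussianFourier.integrable_cexp_neg_mul_sq_norm_add
    (V := EuclideanSpace ℝ (Fin d)) (b := (b:ℂ)) (by simpa using hb) 0 0
  refine h.norm.congr (Filter.Eventually.of_forall fun y => ?_)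
  simp [Complex.norm_exp, ← Complex.ofReal_pow]

lemma gauss_mass (d : ℕ) {s : ℝ} (hs : 0 < s) (a : EuclideanSpace ℝ (Fin d)) :
    ∫⁻ y, ENNReal.ofReal (heatKernel d (2*s) (y + a)) = 1 := by
  rw [lintegral_add_right_eq_self (fun y => ENNReal.ofReal (heatKernel d (2*s) y)) a]
  have hb : (0:ℝ) < (4*s)⁻¹ := by positivity
  have hX : (0:ℝ) < 2 * Real.pi * (2*s) := by positivity
  have hrw : ∀ y : EuclideanSpace ℝ (Fin d),
      heatKernel d (2*s) y = (2*Real.pi*(2*s))^(-(d:ℝ)/2) * Real.exp (-(4*s)⁻¹ * ‖y‖^2) := by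
    intro y
    unfold heatKernel
    congr 1
    ring_nf
  simp_rw [hrw, ENNReal.ofReal_mul (Real.rpow_nonneg hX.le _)]
  rw [lintegral_const_mul _ (by
    exact ENNReal.measurable_ofReal.comp
      (Real.measurable_exp.comp ((measurable_norm.pow measurable_const).const_mul _)))]
  rw [← ofReal_integral_eq_lintegral_ofReal (gauss_integrable d hb)
    (Filter.Eventually.of_forall fun y => (Real.exp_pos _).le)]
  rw [GaussianFourier.integral_rexp_neg_mul_sq_norm hb]
  rw [← ENNReal.ofReal_mul (Real.rpow_nonneg hX.le _)]
  have h1 : Real.pi / (4*s)⁻¹ = 2 * Real.pi * (2*s) := by field_simp; ring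
  rw [finrank_euclideanSpace_fin, h1, ← Real.rpow_add hX, neg_div, neg_add_cancel,
    Real.rpow_zero, ENNReal.ofReal_one]

lemma gauss_mass0 (d : ℕ) {s : ℝ} (hs : 0 < s) :
    ∫⁻ y, ENNReal.ofReal (heatKernel d (2*s) y) = 1 := by
  simpa using gauss_mass d hs 0

lemma vol_singleton_zero (d : ℕ) (hd : 1 ≤ d) (a : EuclideanSpace ℝ (Fin d)) :
    volume ({a} : Set (EuclideanSpace ℝ (Fin d))) = 0 := by
  haveI : Nonempty (Fin d) := ⟨⟨0, hd⟩⟩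
  have h : ({a} : Set (EuclideanSpace ℝ (Fin d))) ⊆ Metric.closedBall a 0 := by
    intro x hx; simp_all
  refine le_antisymm (le_trans (measure_mono h) ?_) zero_le
  rw [EuclideanSpace.volume_closedBall]
  simp [zero_pow (by omega : d ≠ 0), Fintype.card_fin]

lemma riesz_finite (d : ℕ) (hd : 1 ≤ d) {β : ℝ} (hβ0 : 0 < β) (hβd : β < d) :
    ∫⁻ y in Metric.ball (0 : EuclideanSpace ℝ (Fin d)) 1, ENNReal.ofReal (‖y‖ ^ (-β)) < ⊤ := by
  haveI : Nonempty (Fin d) := ⟨⟨0, hd⟩⟩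
  classical
  set Cd : ℝ := Real.sqrt Real.pi ^ d / Real.Gamma (d/2 + 1) with hCddef
  have hCd0 : 0 < Cd := div_pos (pow_pos (Real.sqrt_pos.mpr Real.pi_pos) d)
    (Real.Gamma_pos_of_pos (by positivity))
  set A : ℕ → Set (EuclideanSpace ℝ (Fin d)) :=
    fun m => {y | (2:ℝ)^(-((m:ℝ)+1)) ≤ ‖y‖ ∧ ‖y‖ < (2:ℝ)^(-(m:ℝ))} with hA
  have hAm : ∀ m, MeasurableSet (A m) := by
    intro m
    have : A m = (fun y : EuclideanSpace ℝ (Fin d) => ‖y‖) ⁻¹'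
        (Set.Ico ((2:ℝ)^(-((m:ℝ)+1))) ((2:ℝ)^(-(m:ℝ)))) := rfl
    rw [this]
    exact measurable_norm (measurableSet_Ico)
  have hcover : Metric.ball (0 : EuclideanSpace ℝ (Fin d)) 1 ⊆
      {(0 : EuclideanSpace ℝ (Fin d))} ∪ ⋃ m, A m := by
    intro y hy
    rcases eq_or_ne y 0 with h0 | h0
    · exact Or.inl (by simp [h0])
    · right
      have hy1 : ‖y‖ < 1 := by simpa [mem_ball, dist_eq_norm] using hy
      have hy0 : 0 < ‖y‖ := norm_pos_iff.mpr h0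
      have hex : ∃ n : ℕ, (2:ℝ)^(-(n:ℝ)) ≤ ‖y‖ := by
        obtain ⟨n, hn⟩ := exists_pow_lt_of_lt_one hy0 (by norm_num : (1/2 : ℝ) < 1)
        refine ⟨n, le_of_lt ?_⟩
        calc (2:ℝ)^(-(n:ℝ)) = ((1:ℝ)/2)^n := by
              rw [Real.rpow_neg (by norm_num), Real.rpow_natCast, one_div, inv_pow]
          _ < ‖y‖ := hn
      set n := Nat.find hex with hn
      have hspec : (2:ℝ)^(-(n:ℝ)) ≤ ‖y‖ := Nat.find_spec hex
      have hn0 : n ≠ 0 := by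
        intro h
        rw [h] at hspec
        simp at hspec
        linarith
      obtain ⟨m, hm⟩ := Nat.exists_eq_succ_of_ne_zero hn0
      have hmin : ¬ ((2:ℝ)^(-(m:ℝ)) ≤ ‖y‖) := Nat.find_min hex (by omega)
      refine Set.mem_iUnion.mpr ⟨m, ?_, by linarith [lt_of_not_ge hmin]⟩
      have : ((n:ℝ)) = (m:ℝ) + 1 := by push_cast [hm]; ring
      rw [← this]; exact hspec
  have hzero : ∫⁻ y in ({0} : Set (EuclideanSpace ℝ (Fin d))), ENNReal.ofReal (‖y‖^(-β)) = 0 := by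
    rw [Measure.restrict_eq_zero.mpr (vol_singleton_zero d hd 0), lintegral_zero_measure]
  have hterm : ∀ m : ℕ, ∫⁻ y in A m, ENNReal.ofReal (‖y‖^(-β)) ≤
      ENNReal.ofReal ((2:ℝ)^β * Cd) * (ENNReal.ofReal ((2:ℝ)^(β-(d:ℝ))))^m := by
    intro m
    have h1 : ∫⁻ y in A m, ENNReal.ofReal (‖y‖^(-β)) ≤
        ∫⁻ _ in A m, ENNReal.ofReal (((2:ℝ)^(-((m:ℝ)+1)))^(-β)) := by
      refine setLIntegral_mono' (hAm m) fun y hy => ?_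
      exact ENNReal.ofReal_le_ofReal (Real.rpow_le_rpow_of_nonpos
        (Real.rpow_pos_of_pos two_pos _) hy.1 (neg_nonpos.mpr hβ0.le))
    have h3 : volume (A m) ≤ ENNReal.ofReal ((2:ℝ)^(-(m:ℝ)))^d * ENNReal.ofReal Cd := by
      have hsub : A m ⊆ ball (0 : EuclideanSpace ℝ (Fin d)) ((2:ℝ)^(-(m:ℝ))) := fun y hy =>
        mem_ball_zero_iff.mpr hy.2
      refine le_trans (measure_mono hsub) (le_of_eq ?_)
      rw [EuclideanSpace.volume_ball, Fintype.card_fin]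
    have key : ((2:ℝ)^(-((m:ℝ)+1)))^(-β) * ((2:ℝ)^(-(m:ℝ)))^d * Cd
        = ((2:ℝ)^β * Cd) * ((2:ℝ)^(β-(d:ℝ)))^m := by
      have e1 : ((2:ℝ)^(-((m:ℝ)+1)))^(-β) = (2:ℝ)^(((m:ℝ)+1)*β) := by
        rw [← Real.rpow_mul (by norm_num : (0:ℝ) ≤ 2)]; ring_nf
      have e2 : ((2:ℝ)^(-(m:ℝ)))^d = (2:ℝ)^(-(m:ℝ)*(d:ℝ)) := by
        rw [← Real.rpow_natCast ((2:ℝ)^(-(m:ℝ))) d, ← Real.rpow_mul (by norm_num : (0:ℝ) ≤ 2)]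
      have e3 : ((2:ℝ)^(β-(d:ℝ)))^m = (2:ℝ)^((β-(d:ℝ))*(m:ℝ)) := by
        rw [← Real.rpow_natCast ((2:ℝ)^(β-(d:ℝ))) m, ← Real.rpow_mul (by norm_num : (0:ℝ) ≤ 2)]
      rw [e1, e2, e3, ← Real.rpow_add (by norm_num : (0:ℝ) < 2), mul_right_comm,
        ← Real.rpow_add (by norm_num : (0:ℝ) < 2)]
      congr 2
      ring
    calc ∫⁻ y in A m, ENNReal.ofReal (‖y‖^(-β))
        ≤ ENNReal.ofReal (((2:ℝ)^(-((m:ℝ)+1)))^(-β)) * volume (A m) := by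
          rw [← setLIntegral_const]; exact h1
      _ ≤ ENNReal.ofReal (((2:ℝ)^(-((m:ℝ)+1)))^(-β)) *
            (ENNReal.ofReal ((2:ℝ)^(-(m:ℝ)))^d * ENNReal.ofReal Cd) := by
          exact mul_le_mul_right h3 _
      _ = ENNReal.ofReal ((2:ℝ)^β * Cd) * (ENNReal.ofReal ((2:ℝ)^(β-(d:ℝ))))^m := by
          rw [← ENNReal.ofReal_pow (by positivity), ← ENNReal.ofReal_mul (by positivity),
            ← ENNReal.ofReal_mul (by positivity), ← ENNReal.ofReal_pow (by positivity),
            ← ENNReal.ofReal_mul (by positivity), ← mul_assoc, key]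
  have hq1 : ENNReal.ofReal ((2:ℝ)^(β-(d:ℝ))) < 1 := by
    rw [ENNReal.ofReal_lt_one]
    exact Real.rpow_lt_one_of_one_lt_of_neg one_lt_two (by linarith)
  have hsum : ∑' m : ℕ, ENNReal.ofReal ((2:ℝ)^β * Cd) * (ENNReal.ofReal ((2:ℝ)^(β-(d:ℝ))))^m < ⊤ := by
    rw [ENNReal.tsum_mul_left, ENNReal.tsum_geometric]
    exact ENNReal.mul_lt_top ENNReal.ofReal_lt_top (ENNReal.inv_lt_top.mpr (tsub_pos_of_lt hq1))
  calc ∫⁻ y in ball 0 1, ENNReal.ofReal (‖y‖^(-β))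
      ≤ ∫⁻ y in ({0} ∪ ⋃ m, A m : Set (EuclideanSpace ℝ (Fin d))), ENNReal.ofReal (‖y‖^(-β)) :=
        lintegral_mono' (Measure.restrict_mono hcover le_rfl) le_rfl
    _ ≤ (∫⁻ y in ({0} : Set (EuclideanSpace ℝ (Fin d))), ENNReal.ofReal (‖y‖^(-β))) +
          ∫⁻ y in (⋃ m, A m), ENNReal.ofReal (‖y‖^(-β)) :=
        le_trans (lintegral_mono' (Measure.restrict_union_le _ _) le_rfl)
          (le_of_eq (lintegral_add_measure _ _ _))
    _ ≤ 0 + ∑' m : ℕ, ∫⁻ y in A m, ENNReal.ofReal (‖y‖^(-β)) := by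
        rw [hzero]; exact add_le_add_right (lintegral_iUnion_le _ _) _
    _ ≤ 0 + ∑' m : ℕ, ENNReal.ofReal ((2:ℝ)^β * Cd) * (ENNReal.ofReal ((2:ℝ)^(β-(d:ℝ))))^m := by
        exact add_le_add_right (ENNReal.tsum_le_tsum hterm) _
    _ < ⊤ := by rw [zero_add]; exact hsum

lemma box_measurable (d : ℕ) (R : ℝ) : MeasurableSet (box d R) := by
  have : box d R = ⋂ i, (fun x : EuclideanSpace ℝ (Fin d) => x i) ⁻¹' (Set.Icc (-R) R) := by
    ext x; simp [box, abs_le]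
  rw [this]
  exact MeasurableSet.iInter fun i =>
    ((EuclideanSpace.proj i : EuclideanSpace ℝ (Fin d) →L[ℝ] ℝ).continuous.measurable) measurableSet_Icc

lemma box_volume (d : ℕ) {R : ℝ} (hR : 0 ≤ R) :
    volume (box d R) = ENNReal.ofReal (2*R) ^ d := by
  have h1 : box d R = (MeasurableEquiv.toLp 2 (Fin d → ℝ)).symm ⁻¹'
      (Set.pi Set.univ fun _ : Fin d => Set.Icc (-R) R) := by
    ext x
    simp only [box, Set.mem_setOf_eq, Set.mem_preimage, Set.mem_pi, Set.mem_univ, true_implies,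
      Set.mem_Icc, abs_le]
    rfl
  rw [h1, (EuclideanSpace.volume_preserving_symm_measurableEquiv_toLp (Fin d)).measure_preimage
    (MeasurableSet.univ_pi fun _ => measurableSet_Icc).nullMeasurableSet]
  rw [volume_pi_pi]
  simp only [Real.volume_Icc, Finset.prod_const, Finset.card_univ, Fintype.card_fin]
  congr 2
  ring

lemma norm_le_box (d : ℕ) {R : ℝ} (hR : 0 ≤ R) {x : EuclideanSpace ℝ (Fin d)}
    (hx : x ∈ box d R) : ‖x‖ ≤ Real.sqrt d * R := by
  rw [EuclideanSpace.norm_eq]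
  have h1 : ∑ i, ‖x i‖ ^ 2 ≤ (d : ℝ) * R ^ 2 := by
    calc ∑ i, ‖x i‖ ^ 2 ≤ ∑ _i : Fin d, R ^ 2 := by
          refine Finset.sum_le_sum fun i _ => ?_
          have := hx i
          rw [Real.norm_eq_abs]
          nlinarith [abs_nonneg (x i), sq_abs (x i)]
      _ = (d : ℝ) * R ^ 2 := by rw [Finset.sum_const]; simp [Finset.card_univ]
  calc Real.sqrt (∑ i, ‖x i‖ ^ 2) ≤ Real.sqrt ((d:ℝ) * R ^ 2) := Real.sqrt_le_sqrt h1
    _ = Real.sqrt d * R := by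
        rw [Real.sqrt_mul (by positivity), Real.sqrt_sq hR]

lemma hk_le (d : ℕ) {s : ℝ} (hs : 0 < s) (x : EuclideanSpace ℝ (Fin d)) :
    heatKernel d (2*s) x ≤ (2*Real.pi*(2*s))^(-(d:ℝ)/2) := by
  unfold heatKernel
  have h0 : (0:ℝ) ≤ (2*Real.pi*(2*s))^(-(d:ℝ)/2) := Real.rpow_nonneg (by positivity) _
  have h1 : Real.exp (-‖x‖^2/(2*(2*s))) ≤ 1 := by
    rw [Real.exp_le_one_iff]
    apply div_nonpos_of_nonpos_of_nonneg (neg_nonpos.mpr (by positivity)) (by positivity)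
  calc (2*Real.pi*(2*s))^(-(d:ℝ)/2) * Real.exp (-‖x‖^2/(2*(2*s)))
      ≤ (2*Real.pi*(2*s))^(-(d:ℝ)/2) * 1 := mul_le_mul_of_nonneg_left h1 h0
    _ = _ := mul_one _

lemma hk_ge (d : ℕ) {s : ℝ} (hs : 0 < s) {x : EuclideanSpace ℝ (Fin d)}
    (hx : ‖x‖ ≤ Real.sqrt s) :
    (2*Real.pi*(2*s))^(-(d:ℝ)/2) * Real.exp (-(4:ℝ)⁻¹) ≤ heatKernel d (2*s) x := by
  unfold heatKernel
  refine mul_le_mul_of_nonneg_left ?_ (Real.rpow_nonneg (by positivity) _)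
  rw [Real.exp_le_exp]
  have hx2 : ‖x‖^2 ≤ s := by
    calc ‖x‖^2 ≤ Real.sqrt s ^ 2 := by nlinarith [norm_nonneg x]
      _ = s := Real.sq_sqrt hs.le
  rw [neg_div, neg_le_neg_iff, div_le_iff₀ (by positivity)]
  nlinarith

noncomputable def cLow (d : ℕ) : ℝ :=
  (4*Real.pi)^(-(d:ℝ)/2) * Real.exp (-(4:ℝ)⁻¹) * (Real.sqrt Real.pi ^ d / Real.Gamma (d/2 + 1))

lemma cLow_pos (d : ℕ) : 0 < cLow d := by
  unfold cLow
  have h1 : (0:ℝ) < (4*Real.pi)^(-(d:ℝ)/2) := Real.rpow_pos_of_pos (by positivity) _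
  have h2 : (0:ℝ) < Real.Gamma ((d:ℝ)/2 + 1) := Real.Gamma_pos_of_pos (by positivity)
  have h3 : (0:ℝ) < Real.sqrt Real.pi ^ d := pow_pos (Real.sqrt_pos.mpr Real.pi_pos) d
  positivity

lemma lower_inner (d : ℕ) (hd : 1 ≤ d) {β : ℝ} (hβ0 : 0 < β) {s R : ℝ} (hs : 0 < s) (hs1 : s ≤ 1)
    (hR : 1 ≤ R) {a : EuclideanSpace ℝ (Fin d)} (ha : ‖a‖ ≤ 2 * Real.sqrt d * R) :
    ENNReal.ofReal (cLow d * (3*Real.sqrt d*R) ^ (-β)) ≤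
      ∫⁻ y, ENNReal.ofReal (heatKernel d (2*s) (y - a) * ‖y‖ ^ (-β)) := by
  haveI : Nonempty (Fin d) := ⟨⟨0, hd⟩⟩
  have hd1 : (1:ℝ) ≤ Real.sqrt d := by
    rw [show (1:ℝ) = Real.sqrt 1 from Real.sqrt_one.symm]
    exact Real.sqrt_le_sqrt (by exact_mod_cast hd)
  have hdR : (1:ℝ) ≤ Real.sqrt d * R := le_trans hd1 (le_mul_of_one_le_right (by positivity) hR)
  set Cd : ℝ := Real.sqrt Real.pi ^ d / Real.Gamma (d/2 + 1) with hCddef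
  set r := Real.sqrt s with hr
  have hr0 : 0 < r := Real.sqrt_pos.mpr hs
  have hr1 : r ≤ 1 := by
    have := Real.sqrt_le_sqrt hs1
    rwa [Real.sqrt_one] at this
  set v := (2*Real.pi*(2*s))^(-(d:ℝ)/2) * Real.exp (-(4:ℝ)⁻¹) * ((3*Real.sqrt d*R) ^ (-β)) with hv
  have hv0 : 0 ≤ v := by
    rw [hv]
    have := Real.rpow_nonneg (show (0:ℝ) ≤ 2*Real.pi*(2*s) by positivity) (-(d:ℝ)/2)
    positivity
  set S := ball a r \ {(0 : EuclideanSpace ℝ (Fin d))} with hS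
  have hmeas : Measurable fun y : EuclideanSpace ℝ (Fin d) =>
      ENNReal.ofReal (heatKernel d (2*s) (y - a) * ‖y‖ ^ (-β)) :=
    ENNReal.measurable_ofReal.comp ((measurable_heatKernel_comp measurable_const
      (measurable_id.sub measurable_const)).mul (measurable_norm.pow measurable_const))
  have hpt : ∀ y ∈ S, ENNReal.ofReal v ≤
      ENNReal.ofReal (heatKernel d (2*s) (y - a) * ‖y‖ ^ (-β)) := by
    intro y hy
    obtain ⟨hyb, hy0⟩ := hy
    have hy0' : y ≠ 0 := by simpa using hy0
    have hyr : ‖y - a‖ ≤ r := le_of_lt (by rwa [mem_ball, dist_eq_norm] at hyb)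
    have hynorm : ‖y‖ ≤ 3*Real.sqrt d*R := by
      calc ‖y‖ = ‖(y - a) + a‖ := by rw [sub_add_cancel]
        _ ≤ ‖y - a‖ + ‖a‖ := norm_add_le _ _
        _ ≤ 1 + 2*Real.sqrt d*R := add_le_add (le_trans hyr hr1) ha
        _ ≤ 3*Real.sqrt d*R := by nlinarith [hdR]
    have h1 : (3*Real.sqrt d*R) ^ (-β) ≤ ‖y‖ ^ (-β) :=
      Real.rpow_le_rpow_of_nonpos (norm_pos_iff.mpr hy0') hynorm (neg_nonpos.mpr hβ0.le)
    have h2 := hk_ge d hs (x := y - a) hyr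
    refine ENNReal.ofReal_le_ofReal ?_
    calc v = ((2*Real.pi*(2*s))^(-(d:ℝ)/2) * Real.exp (-(4:ℝ)⁻¹)) * ((3*Real.sqrt d*R) ^ (-β)) := by
          rw [hv]
      _ ≤ heatKernel d (2*s) (y - a) * ‖y‖ ^ (-β) :=
          mul_le_mul h2 h1 (Real.rpow_nonneg (by positivity) _) (hk_nonneg d (by positivity) _)
  have step1 : ENNReal.ofReal v * volume S ≤
      ∫⁻ y, ENNReal.ofReal (heatKernel d (2*s) (y - a) * ‖y‖ ^ (-β)) := by
    calc ENNReal.ofReal v * volume S = ∫⁻ _ in S, ENNReal.ofReal v := (setLIntegral_const _ _).symm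
      _ ≤ ∫⁻ y in S, ENNReal.ofReal (heatKernel d (2*s) (y - a) * ‖y‖ ^ (-β)) :=
          setLIntegral_mono hmeas hpt
      _ ≤ _ := setLIntegral_le_lintegral _ _
  have hvolS : volume S = ENNReal.ofReal r ^ d * ENNReal.ofReal Cd := by
    rw [hS, measure_diff_null (vol_singleton_zero d hd 0), EuclideanSpace.volume_ball,
      Fintype.card_fin]
  refine le_trans (le_of_eq ?_) step1
  rw [hvolS, ← ENNReal.ofReal_pow hr0.le, ← ENNReal.ofReal_mul (by positivity),
    ← ENNReal.ofReal_mul hv0]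
  congr 1
  have hkey : (2*Real.pi*(2*s))^(-(d:ℝ)/2) * r ^ d = (4*Real.pi)^(-(d:ℝ)/2) := by
    have h2 : 2*Real.pi*(2*s) = (4*Real.pi)*s := by ring
    rw [h2, Real.mul_rpow (by positivity) hs.le]
    have hrd : r ^ d = s ^ ((d:ℝ)/2) := by
      rw [hr, ← Real.rpow_natCast (Real.sqrt s) d, Real.sqrt_eq_rpow, ← Real.rpow_mul hs.le,
        show 1/2*(d:ℝ) = (d:ℝ)/2 by ring]
    rw [hrd, mul_assoc, ← Real.rpow_add hs, neg_div, neg_add_cancel, Real.rpow_zero, mul_one]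
  have hrw : v * (r ^ d * Cd) = ((2*Real.pi*(2*s))^(-(d:ℝ)/2) * r ^ d) *
      (Real.exp (-(4:ℝ)⁻¹) * Cd * ((3*Real.sqrt d*R) ^ (-β))) := by rw [hv]; ring
  rw [hrw, hkey]
  unfold cLow
  rw [hCddef]
  ring

end Aux

section Levels

open ENNReal Metric Set

noncomputable def FF (d : ℕ) (β s : ℝ) (x₁ x₂ y : EuclideanSpace ℝ (Fin d)) : ℝ≥0∞ :=
  ENNReal.ofReal (heatKernel d (2*s) (y - x₁ + x₂) * ‖y‖ ^ (-β))

noncomputable def L1 (d : ℕ) (β s : ℝ) (x₁ x₂ : EuclideanSpace ℝ (Fin d)) : ℝ≥0∞ :=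
  ∫⁻ y, FF d β s x₁ x₂ y

noncomputable def L2 (d : ℕ) (β R s : ℝ) (x₁ : EuclideanSpace ℝ (Fin d)) : ℝ≥0∞ :=
  ∫⁻ x₂ in box d R, L1 d β s x₁ x₂

noncomputable def L3 (d : ℕ) (β R s : ℝ) : ℝ≥0∞ :=
  ∫⁻ x₁ in box d R, L2 d β R s x₁

lemma measurable_FF_x2y (d : ℕ) (β s : ℝ) (x₁ : EuclideanSpace ℝ (Fin d)) :
    Measurable (fun z : EuclideanSpace ℝ (Fin d) × EuclideanSpace ℝ (Fin d) =>
      FF d β s x₁ z.1 z.2) := by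
  unfold FF
  exact ENNReal.measurable_ofReal.comp ((measurable_heatKernel_comp measurable_const
    ((measurable_snd.sub measurable_const).add measurable_fst)).mul
    ((measurable_snd.norm).pow measurable_const))

lemma measurable_L1_x2 (d : ℕ) (β s : ℝ) (x₁ : EuclideanSpace ℝ (Fin d)) :
    Measurable (fun x₂ => L1 d β s x₁ x₂) :=
  Measurable.lintegral_prod_right' (measurable_FF_x2y d β s x₁)

lemma measurable_L2_x1 (d : ℕ) (β R s : ℝ) :
    Measurable (fun x₁ => L2 d β R s x₁) := by
  apply Measurable.lintegral_prod_right'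
    (f := fun z : EuclideanSpace ℝ (Fin d) × EuclideanSpace ℝ (Fin d) => L1 d β s z.1 z.2)
  apply Measurable.lintegral_prod_right'
    (f := fun w : (EuclideanSpace ℝ (Fin d) × EuclideanSpace ℝ (Fin d)) ×
      EuclideanSpace ℝ (Fin d) => FF d β s w.1.1 w.1.2 w.2)
  unfold FF
  exact ENNReal.measurable_ofReal.comp ((measurable_heatKernel_comp measurable_const
    ((measurable_snd.sub measurable_fst.fst).add measurable_fst.snd)).mul
    ((measurable_snd.norm).pow measurable_const))

lemma measurable_L3_s (d : ℕ) (β R : ℝ) :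
    Measurable (fun s => L3 d β R s) := by
  apply Measurable.lintegral_prod_right'
    (f := fun p : ℝ × EuclideanSpace ℝ (Fin d) => L2 d β R p.1 p.2)
  apply Measurable.lintegral_prod_right'
    (f := fun w : (ℝ × EuclideanSpace ℝ (Fin d)) × EuclideanSpace ℝ (Fin d) =>
      L1 d β w.1.1 w.1.2 w.2)
  apply Measurable.lintegral_prod_right'
    (f := fun q : ((ℝ × EuclideanSpace ℝ (Fin d)) × EuclideanSpace ℝ (Fin d)) ×
      EuclideanSpace ℝ (Fin d) => FF d β q.1.1.1 q.1.1.2 q.1.2 q.2)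
  unfold FF
  exact ENNReal.measurable_ofReal.comp ((measurable_heatKernel_comp
    ((measurable_fst.fst.fst).const_mul 2)
    ((measurable_snd.sub measurable_fst.fst.snd).add measurable_fst.snd)).mul
    ((measurable_snd.norm).pow measurable_const))

lemma L1_le (d : ℕ) {β : ℝ} (hβ0 : 0 < β) {s : ℝ} (hs : 0 < s)
    (x₁ x₂ : EuclideanSpace ℝ (Fin d)) :
    L1 d β s x₁ x₂ ≤ (∫⁻ y in ball (0 : EuclideanSpace ℝ (Fin d)) 1, FF d β s x₁ x₂ y) + 1 := by
  rw [L1, ← lintegral_add_compl (FF d β s x₁ x₂)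
    (measurableSet_ball (x := (0 : EuclideanSpace ℝ (Fin d))) (ε := 1))]
  refine add_le_add_right ?_ _
  have hmeas : Measurable fun y : EuclideanSpace ℝ (Fin d) =>
      ENNReal.ofReal (heatKernel d (2*s) (y - x₁ + x₂)) :=
    ENNReal.measurable_ofReal.comp (measurable_heatKernel_comp measurable_const
      ((measurable_id.sub measurable_const).add measurable_const))
  calc ∫⁻ y in (ball (0 : EuclideanSpace ℝ (Fin d)) 1)ᶜ, FF d β s x₁ x₂ y
      ≤ ∫⁻ y in (ball (0 : EuclideanSpace ℝ (Fin d)) 1)ᶜ,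
          ENNReal.ofReal (heatKernel d (2*s) (y - x₁ + x₂)) := by
        refine setLIntegral_mono hmeas fun y hy => ?_
        have hy1 : (1:ℝ) ≤ ‖y‖ := by
          simp only [mem_compl_iff, mem_ball, dist_zero_right, not_lt] at hy
          exact hy
        refine ENNReal.ofReal_le_ofReal ?_
        calc heatKernel d (2*s) (y - x₁ + x₂) * ‖y‖ ^ (-β)
            ≤ heatKernel d (2*s) (y - x₁ + x₂) * 1 :=
              mul_le_mul_of_nonneg_left
                (Real.rpow_le_one_of_one_le_of_nonpos hy1 (neg_nonpos.mpr hβ0.le))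
                (hk_nonneg d (by positivity) _)
          _ = _ := mul_one _
    _ ≤ ∫⁻ y, ENNReal.ofReal (heatKernel d (2*s) (y - x₁ + x₂)) := setLIntegral_le_lintegral _ _
    _ = 1 := by
        simp_rw [show ∀ y : EuclideanSpace ℝ (Fin d), y - x₁ + x₂ = y + (x₂ - x₁) from
          fun y => by abel]
        exact gauss_mass d hs _

lemma L1_ball_le (d : ℕ) {β : ℝ} {s : ℝ} (hs : 0 < s) (x₁ x₂ : EuclideanSpace ℝ (Fin d)) :
    (∫⁻ y in ball (0 : EuclideanSpace ℝ (Fin d)) 1, FF d β s x₁ x₂ y) ≤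
      ENNReal.ofReal ((2*Real.pi*(2*s))^(-(d:ℝ)/2)) *
        ∫⁻ y in ball (0 : EuclideanSpace ℝ (Fin d)) 1, ENNReal.ofReal (‖y‖ ^ (-β)) := by
  have hmeas' : Measurable fun y : EuclideanSpace ℝ (Fin d) => ENNReal.ofReal (‖y‖ ^ (-β)) :=
    ENNReal.measurable_ofReal.comp (measurable_norm.pow measurable_const)
  rw [← lintegral_const_mul _ hmeas']
  refine lintegral_mono fun y => ?_
  rw [FF, ← ENNReal.ofReal_mul (Real.rpow_nonneg (by positivity) _)]
  refine ENNReal.ofReal_le_ofReal ?_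
  exact mul_le_mul_of_nonneg_right (hk_le d hs _) (Real.rpow_nonneg (norm_nonneg _) _)

lemma L1_lt_top (d : ℕ) (hd : 1 ≤ d) {β : ℝ} (hβ0 : 0 < β) (hβd : β < d) {s : ℝ} (hs : 0 < s)
    (x₁ x₂ : EuclideanSpace ℝ (Fin d)) : L1 d β s x₁ x₂ < ⊤ :=
  lt_of_le_of_lt (L1_le d hβ0 hs x₁ x₂) (by
    refine ENNReal.add_lt_top.mpr ⟨lt_of_le_of_lt (L1_ball_le d hs x₁ x₂) ?_, ENNReal.one_lt_top⟩
    exact ENNReal.mul_lt_top ENNReal.ofReal_lt_top (riesz_finite d hd hβ0 hβd))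

lemma L2_le (d : ℕ) {β : ℝ} (hβ0 : 0 < β) {R s : ℝ} (hs : 0 < s)
    (x₁ : EuclideanSpace ℝ (Fin d)) :
    L2 d β R s x₁ ≤ (∫⁻ y in ball (0 : EuclideanSpace ℝ (Fin d)) 1, ENNReal.ofReal (‖y‖ ^ (-β)))
      + volume (box d R) := by
  calc L2 d β R s x₁
      ≤ ∫⁻ x₂ in box d R,
          ((∫⁻ y in ball (0 : EuclideanSpace ℝ (Fin d)) 1, FF d β s x₁ x₂ y) + 1) :=
        lintegral_mono fun x₂ => L1_le d hβ0 hs x₁ x₂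
    _ = (∫⁻ x₂ in box d R, ∫⁻ y in ball (0 : EuclideanSpace ℝ (Fin d)) 1, FF d β s x₁ x₂ y)
          + 1 * volume (box d R) := by
        rw [lintegral_add_right _ measurable_const, setLIntegral_const]
    _ ≤ (∫⁻ y in ball (0 : EuclideanSpace ℝ (Fin d)) 1, ENNReal.ofReal (‖y‖ ^ (-β)))
          + volume (box d R) := by
        rw [one_mul]
        refine add_le_add_left ?_ _
        rw [lintegral_lintegral_swap ((measurable_FF_x2y d β s x₁).aemeasurable)]
        refine lintegral_mono fun y => ?_
        have hpt : ∀ x₂ : EuclideanSpace ℝ (Fin d), FF d β s x₁ x₂ y =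
            ENNReal.ofReal (‖y‖ ^ (-β)) *
              ENNReal.ofReal (heatKernel d (2*s) ((y - x₁) + x₂)) := by
          intro x₂
          rw [FF, mul_comm (heatKernel _ _ _),
            ENNReal.ofReal_mul (Real.rpow_nonneg (norm_nonneg _) _)]
        simp_rw [hpt]
        calc ∫⁻ x₂ in box d R, ENNReal.ofReal (‖y‖ ^ (-β)) *
              ENNReal.ofReal (heatKernel d (2*s) ((y - x₁) + x₂))
            ≤ ∫⁻ x₂, ENNReal.ofReal (‖y‖ ^ (-β)) *
              ENNReal.ofReal (heatKernel d (2*s) ((y - x₁) + x₂)) :=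
              setLIntegral_le_lintegral _ _
          _ = ENNReal.ofReal (‖y‖ ^ (-β)) *
              ∫⁻ x₂, ENNReal.ofReal (heatKernel d (2*s) ((y - x₁) + x₂)) :=
              lintegral_const_mul _ (show Measurable fun x₂ : EuclideanSpace ℝ (Fin d) =>
                ENNReal.ofReal (heatKernel d (2*s) ((y - x₁) + x₂)) from
                ENNReal.measurable_ofReal.comp
                  (measurable_heatKernel_comp measurable_const (measurable_const.add measurable_id)))
          _ = ENNReal.ofReal (‖y‖ ^ (-β)) := by
              rw [lintegral_add_left_eq_self
                (fun z => ENNReal.ofReal (heatKernel d (2*s) z)) (y - x₁), gauss_mass0 d hs,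
                mul_one]

lemma L3_le (d : ℕ) {β : ℝ} (hβ0 : 0 < β) {R s : ℝ} (hs : 0 < s) :
    L3 d β R s ≤ ((∫⁻ y in ball (0 : EuclideanSpace ℝ (Fin d)) 1, ENNReal.ofReal (‖y‖ ^ (-β)))
      + volume (box d R)) * volume (box d R) := by
  calc L3 d β R s
      ≤ ∫⁻ _ in box d R,
          ((∫⁻ y in ball (0 : EuclideanSpace ℝ (Fin d)) 1, ENNReal.ofReal (‖y‖ ^ (-β)))
            + volume (box d R)) := lintegral_mono fun x₁ => L2_le d hβ0 hs x₁
    _ = _ := setLIntegral_const _ _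

lemma L1_lower (d : ℕ) (hd : 1 ≤ d) {β : ℝ} (hβ0 : 0 < β) {s R : ℝ} (hs : 0 < s) (hs1 : s ≤ 1)
    (hR : 1 ≤ R) {x₁ x₂ : EuclideanSpace ℝ (Fin d)} (h1 : x₁ ∈ box d R) (h2 : x₂ ∈ box d R) :
    ENNReal.ofReal (cLow d * (3*Real.sqrt d*R) ^ (-β)) ≤ L1 d β s x₁ x₂ := by
  have hR0 : (0:ℝ) ≤ R := le_trans zero_le_one hR
  have ha : ‖x₁ - x₂‖ ≤ 2 * Real.sqrt d * R := by
    calc ‖x₁ - x₂‖ ≤ ‖x₁‖ + ‖x₂‖ := norm_sub_le _ _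
      _ ≤ Real.sqrt d * R + Real.sqrt d * R :=
          add_le_add (norm_le_box d hR0 h1) (norm_le_box d hR0 h2)
      _ = 2 * Real.sqrt d * R := by ring
  have h := lower_inner d hd hβ0 hs hs1 hR ha
  rw [L1]
  simp_rw [FF, show ∀ y : EuclideanSpace ℝ (Fin d), y - x₁ + x₂ = y - (x₁ - x₂) from
    fun y => by abel]
  exact h

end Levels

theorem stmt_10 (d : ℕ) (hd : 1 ≤ d) (β : ℝ) (hβ0 : 0 < β) (hβd : β < d) :
    ∃ c : ℝ, 0 < c ∧ ∀ R : ℝ, 1 ≤ R → ∀ T : ℝ, 0 < T → T ≤ 1 →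
      c * T * R ^ (2 * (d : ℝ) - β) ≤
        ∫ s in Set.Ioc (0 : ℝ) T,
          ∫ x₁ in box d R, ∫ x₂ in box d R,
            ∫ ytil : EuclideanSpace ℝ (Fin d),
              heatKernel d (2 * s) (ytil - x₁ + x₂) * ‖ytil‖ ^ (-β) := by
  classical
  have hsd : (0:ℝ) < Real.sqrt d := Real.sqrt_pos.mpr (by exact_mod_cast hd)
  refine ⟨cLow d * (3*Real.sqrt d) ^ (-β) * 2^(2*d), ?_, ?_⟩
  · have h1 := cLow_pos d
    have h2 : (0:ℝ) < (3*Real.sqrt d) ^ (-β) := Real.rpow_pos_of_pos (by positivity) _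
    positivity
  intro R hR T hT0 hT1
  have hR0 : (0:ℝ) ≤ R := le_trans zero_le_one hR
  have hRpos : (0:ℝ) < R := lt_of_lt_of_le one_pos hR
  have hKlt : (∫⁻ y in Metric.ball (0 : EuclideanSpace ℝ (Fin d)) 1,
      ENNReal.ofReal (‖y‖ ^ (-β))) < ⊤ := riesz_finite d hd hβ0 hβd
  have hvboxlt : volume (box d R) < ⊤ := by
    rw [box_volume d hR0]; exact ENNReal.pow_lt_top ENNReal.ofReal_lt_top
  have hL2top : ∀ {s : ℝ}, 0 < s → ∀ x₁ : EuclideanSpace ℝ (Fin d), L2 d β R s x₁ < ⊤ :=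
    fun {s} hs x₁ => lt_of_le_of_lt (L2_le d hβ0 hs x₁) (ENNReal.add_lt_top.mpr ⟨hKlt, hvboxlt⟩)
  have hL3top : ∀ {s : ℝ}, 0 < s → L3 d β R s < ⊤ := fun {s} hs =>
    lt_of_le_of_lt (L3_le d hβ0 hs)
      (ENNReal.mul_lt_top (ENNReal.add_lt_top.mpr ⟨hKlt, hvboxlt⟩) hvboxlt)
  -- conversion of Bochner integrals to lintegrals
  have step_inner : ∀ s : ℝ, 0 < s → ∀ x₁ x₂ : EuclideanSpace ℝ (Fin d),
      (∫ ytil : EuclideanSpace ℝ (Fin d),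
          heatKernel d (2 * s) (ytil - x₁ + x₂) * ‖ytil‖ ^ (-β))
        = (L1 d β s x₁ x₂).toReal := by
    intro s hs x₁ x₂
    have hms : AEStronglyMeasurable (fun ytil : EuclideanSpace ℝ (Fin d) =>
        heatKernel d (2 * s) (ytil - x₁ + x₂) * ‖ytil‖ ^ (-β)) volume :=
      ((measurable_heatKernel_comp measurable_const
        ((measurable_id.sub measurable_const).add measurable_const)).mul
        ((measurable_norm.pow measurable_const))).aestronglyMeasurable
    have hnn : (0 : EuclideanSpace ℝ (Fin d) → ℝ) ≤ᵐ[volume] fun ytil =>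
        heatKernel d (2 * s) (ytil - x₁ + x₂) * ‖ytil‖ ^ (-β) :=
      Filter.Eventually.of_forall fun y =>
        mul_nonneg (hk_nonneg d (show (0:ℝ) < 2*s by positivity) _)
          (Real.rpow_nonneg (norm_nonneg _) _)
    rw [integral_eq_lintegral_of_nonneg_ae hnn hms]
    rfl
  have step2 : ∀ s : ℝ, 0 < s → ∀ x₁ : EuclideanSpace ℝ (Fin d),
      (∫ x₂ in box d R, (L1 d β s x₁ x₂).toReal) = (L2 d β R s x₁).toReal := by
    intro s hs x₁
    rw [integral_eq_lintegral_of_nonneg_ae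
      (Filter.Eventually.of_forall fun x₂ => ENNReal.toReal_nonneg)
      ((measurable_L1_x2 d β s x₁).ennreal_toReal.aestronglyMeasurable)]
    unfold L2
    congr 1
    refine lintegral_congr fun x₂ => ?_
    rw [ENNReal.ofReal_toReal (L1_lt_top d hd hβ0 hβd hs x₁ x₂).ne]
  have step3 : ∀ s : ℝ, 0 < s →
      (∫ x₁ in box d R, (L2 d β R s x₁).toReal) = (L3 d β R s).toReal := by
    intro s hs
    rw [integral_eq_lintegral_of_nonneg_ae
      (Filter.Eventually.of_forall fun x₁ => ENNReal.toReal_nonneg)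
      ((measurable_L2_x1 d β R s).ennreal_toReal.aestronglyMeasurable)]
    unfold L3
    congr 1
    refine lintegral_congr fun x₁ => ?_
    rw [ENNReal.ofReal_toReal (hL2top hs x₁).ne]
  have congr1 : ∀ s ∈ Set.Ioc (0:ℝ) T,
      (∫ x₁ in box d R, ∫ x₂ in box d R, ∫ ytil : EuclideanSpace ℝ (Fin d),
          heatKernel d (2 * s) (ytil - x₁ + x₂) * ‖ytil‖ ^ (-β))
        = (L3 d β R s).toReal := by
    intro s hs
    have hs0 : 0 < s := hs.1
    have e1 : (∫ x₁ in box d R, ∫ x₂ in box d R, ∫ ytil : EuclideanSpace ℝ (Fin d),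
        heatKernel d (2 * s) (ytil - x₁ + x₂) * ‖ytil‖ ^ (-β))
        = ∫ x₁ in box d R, (L2 d β R s x₁).toReal := by
      refine setIntegral_congr_fun (box_measurable d R) fun x₁ _ => ?_
      rw [← step2 s hs0 x₁]
      exact setIntegral_congr_fun (box_measurable d R) fun x₂ _ => step_inner s hs0 x₁ x₂
    rw [e1, step3 s hs0]
  have main_eq : (∫ s in Set.Ioc (0 : ℝ) T,
      ∫ x₁ in box d R, ∫ x₂ in box d R, ∫ ytil : EuclideanSpace ℝ (Fin d),
        heatKernel d (2 * s) (ytil - x₁ + x₂) * ‖ytil‖ ^ (-β))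
      = (∫⁻ s in Set.Ioc (0:ℝ) T, L3 d β R s).toReal := by
    rw [setIntegral_congr_fun measurableSet_Ioc congr1]
    rw [integral_eq_lintegral_of_nonneg_ae
      (Filter.Eventually.of_forall fun s => ENNReal.toReal_nonneg)
      ((measurable_L3_s d β R).ennreal_toReal.aestronglyMeasurable)]
    congr 1
    refine setLIntegral_congr_fun measurableSet_Ioc (fun s hs => ?_)
    rw [ENNReal.ofReal_toReal (hL3top hs.1).ne]
  -- lower bound for the lintegral
  set γ : ENNReal := ENNReal.ofReal (cLow d * (3*Real.sqrt d*R) ^ (-β)) with hγ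
  have hlow3 : ∀ s ∈ Set.Ioc (0:ℝ) T, γ * volume (box d R) * volume (box d R) ≤ L3 d β R s := by
    intro s hs
    have hs0 : 0 < s := hs.1
    have hs1 : s ≤ 1 := le_trans hs.2 hT1
    have hlow2 : ∀ x₁ ∈ box d R, γ * volume (box d R) ≤ L2 d β R s x₁ := by
      intro x₁ hx₁
      calc γ * volume (box d R) = ∫⁻ _ in box d R, γ := (setLIntegral_const _ _).symm
        _ ≤ ∫⁻ x₂ in box d R, L1 d β s x₁ x₂ :=
            setLIntegral_mono' (box_measurable d R) fun x₂ hx₂ =>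
              L1_lower d hd hβ0 hs0 hs1 hR hx₁ hx₂
    calc γ * volume (box d R) * volume (box d R)
        = ∫⁻ _ in box d R, γ * volume (box d R) := by
          rw [setLIntegral_const]
      _ ≤ ∫⁻ x₁ in box d R, L2 d β R s x₁ := setLIntegral_mono' (box_measurable d R) hlow2
  have hlow4 : γ * volume (box d R) * volume (box d R) * ENNReal.ofReal T ≤
      ∫⁻ s in Set.Ioc (0:ℝ) T, L3 d β R s := by
    calc γ * volume (box d R) * volume (box d R) * ENNReal.ofReal T
        = γ * volume (box d R) * volume (box d R) * volume (Set.Ioc (0:ℝ) T) := by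
          rw [Real.volume_Ioc, sub_zero]
      _ = ∫⁻ _ in Set.Ioc (0:ℝ) T, γ * volume (box d R) * volume (box d R) :=
          (setLIntegral_const _ _).symm
      _ ≤ ∫⁻ s in Set.Ioc (0:ℝ) T, L3 d β R s := setLIntegral_mono' measurableSet_Ioc hlow3
  have hL4top : (∫⁻ s in Set.Ioc (0:ℝ) T, L3 d β R s) < ⊤ := by
    calc ∫⁻ s in Set.Ioc (0:ℝ) T, L3 d β R s
        ≤ ∫⁻ _ in Set.Ioc (0:ℝ) T,
            (((∫⁻ y in Metric.ball (0 : EuclideanSpace ℝ (Fin d)) 1,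
              ENNReal.ofReal (‖y‖ ^ (-β))) + volume (box d R)) * volume (box d R)) :=
          setLIntegral_mono' measurableSet_Ioc fun s hs => L3_le d hβ0 hs.1
      _ = _ * volume (Set.Ioc (0:ℝ) T) := setLIntegral_const _ _
      _ < ⊤ := ENNReal.mul_lt_top
          (ENNReal.mul_lt_top (ENNReal.add_lt_top.mpr ⟨hKlt, hvboxlt⟩) hvboxlt)
          (by rw [Real.volume_Ioc]; exact ENNReal.ofReal_lt_top)
  -- key real inequality
  have hreal : cLow d * (3*Real.sqrt d) ^ (-β) * 2^(2*d) * T * R ^ (2*(d:ℝ)-β)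
      = (cLow d * (3*Real.sqrt d*R) ^ (-β)) * (2*R)^d * (2*R)^d * T := by
    rw [Real.mul_rpow (by positivity) hR0]
    rw [show 2*(d:ℝ) - β = ((2*d : ℕ) : ℝ) + (-β) by push_cast; ring,
      Real.rpow_add hRpos, Real.rpow_natCast]
    ring
  have hofReal : ENNReal.ofReal (cLow d * (3*Real.sqrt d) ^ (-β) * 2^(2*d) * T *
      R ^ (2*(d:ℝ)-β)) ≤ ∫⁻ s in Set.Ioc (0:ℝ) T, L3 d β R s := by
    refine le_trans (le_of_eq ?_) hlow4
    rw [hreal, box_volume d hR0, hγ, ← ENNReal.ofReal_pow (by positivity)]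
    have h1 : (0:ℝ) ≤ cLow d * (3*Real.sqrt d*R) ^ (-β) :=
      mul_nonneg (cLow_pos d).le (Real.rpow_nonneg (by positivity) _)
    rw [← ENNReal.ofReal_mul h1, ← ENNReal.ofReal_mul (by positivity),
      ← ENNReal.ofReal_mul (by positivity)]
  rw [main_eq]
  have hnn : (0:ℝ) ≤ cLow d * (3*Real.sqrt d) ^ (-β) * 2^(2*d) * T * R ^ (2*(d:ℝ)-β) := by
    have h1 := (cLow_pos d).le
    have h2 : (0:ℝ) ≤ (3*Real.sqrt d) ^ (-β) := Real.rpow_nonneg (by positivity) _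
    have h3 : (0:ℝ) ≤ R ^ (2*(d:ℝ)-β) := Real.rpow_nonneg hR0 _
    positivity
  calc cLow d * (3*Real.sqrt d) ^ (-β) * 2^(2*d) * T * R ^ (2*(d:ℝ)-β)
      = (ENNReal.ofReal (cLow d * (3*Real.sqrt d) ^ (-β) * 2^(2*d) * T *
          R ^ (2*(d:ℝ)-β))).toReal := (ENNReal.toReal_ofReal hnn).symm
    _ ≤ (∫⁻ s in Set.Ioc (0:ℝ) T, L3 d β R s).toReal :=
        ENNReal.toReal_mono hL4top.ne hofReal
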